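/- Let (A,·) be a finite-dimensional (nonunital) associative algebra over a field F and let r ∈ A⊗A be an antisymmetric solution of the associative Yang–Baxter equation. Let ∘ be the induced product on A*: a*∘b* = R·*(r(a*))b* + L·*(r(b*))a*. Then r(a*∘b*) = r(a*)·r(b*) for all a*, b* ∈ A*, i.e. the induced linear map r : (A*,∘) → (A,·) is a homomorphism of associative algebras. -/

import Mathlib

open TensorProduct LinearMap

section Prelude
variable {F : Type*} [Field F]

/-- Associativity of a (nonunital) bilinear product. -/
def IsAssocMul {A : Type*} [AddCommGroup A] [Module F A]
    (m : A →ₗ[F] A →ₗ[F] A) : Prop :=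
  ∀ x y z, m (m x y) z = m x (m y z)

/-- `(l, r, V)` is a bimodule of the associative algebra `(A, m)`. -/
def IsBimodule {A V : Type*} [AddCommGroup A] [Module F A]
    [AddCommGroup V] [Module F V]
    (m : A →ₗ[F] A →ₗ[F] A) (l r : A →ₗ[F] V →ₗ[F] V) : Prop :=
  (∀ x y v, l (m x y) v = l x (l y v)) ∧
  (∀ x y v, r (m x y) v = r y (r x v)) ∧
  (∀ x y v, l x (r y v) = r y (l x v))

/-- `(A, B, lA, rA, lB, rB)` is a matched pair of associative algebras. -/
def IsMatchedPair {A B : Type*} [AddCommGroup A] [Module F A]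
    [AddCommGroup B] [Module F B]
    (mA : A →ₗ[F] A →ₗ[F] A) (mB : B →ₗ[F] B →ₗ[F] B)
    (lA rA : A →ₗ[F] B →ₗ[F] B) (lB rB : B →ₗ[F] A →ₗ[F] A) : Prop :=
  IsAssocMul mA ∧ IsAssocMul mB ∧ IsBimodule mA lA rA ∧ IsBimodule mB lB rB ∧
  (∀ x a b, lA x (mB a b) = lA (rB a x) b + mB (lA x a) b) ∧
  (∀ x a b, rA x (mB a b) = rA (lB b x) a + mB a (rA x b)) ∧
  (∀ a x y, lB a (mA x y) = lB (rA x a) y + mA (lB a x) y) ∧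
  (∀ a x y, rB a (mA x y) = rB (lA y a) x + mA x (rB a y)) ∧
  (∀ x a b, lA (lB a x) b + mB (rA x a) b - rA (rB b x) a - mB a (lA x b) = 0) ∧
  (∀ a x y, lB (lA x a) y + mA (rB a x) y - rB (rA y a) x - mA x (lB a y) = 0)

/-- Dendriform algebra axioms for a pair of bilinear products `≻ = s`, `≺ = p`. -/
def IsDendriform {A : Type*} [AddCommGroup A] [Module F A]
    (s p : A →ₗ[F] A →ₗ[F] A) : Prop :=
  (∀ x y z, p (p x y) z = p x (s y z + p y z)) ∧
  (∀ x y z, p (s x y) z = s x (p y z)) ∧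
  (∀ x y z, s x (s y z) = s (s x y + p x y) z)

/-- The pairing of `f ⊗ g ∈ A* ⊗ A*` with elements of `A ⊗ A`. -/
noncomputable def pair2 {A : Type*} [AddCommGroup A] [Module F A]
    (f g : Module.Dual F A) : (A ⊗[F] A) →ₗ[F] F :=
  (TensorProduct.lid F F).toLinearMap ∘ₗ TensorProduct.map f g

/-- `t12 m (r ⊗ s)` is `r₁₂ ∙ s₁₃`: on `(x ⊗ y) ⊗ (x' ⊗ y')` it gives `m x x' ⊗ y ⊗ y'`. -/
noncomputable def t12 {A : Type*} [AddCommGroup A] [Module F A]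
    (m : A →ₗ[F] A →ₗ[F] A) :
    ((A ⊗[F] A) ⊗[F] (A ⊗[F] A)) →ₗ[F] A ⊗[F] (A ⊗[F] A) :=
  TensorProduct.map (TensorProduct.lift m) LinearMap.id ∘ₗ
    (TensorProduct.tensorTensorTensorComm F A A A A).toLinearMap

/-- `t13 m (r ⊗ s)` is `r₁₃ ∙ s₂₃`: on `(x ⊗ y) ⊗ (x' ⊗ y')` it gives `x ⊗ x' ⊗ m y y'`. -/
noncomputable def t13 {A : Type*} [AddCommGroup A] [Module F A]
    (m : A →ₗ[F] A →ₗ[F] A) :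
    ((A ⊗[F] A) ⊗[F] (A ⊗[F] A)) →ₗ[F] A ⊗[F] (A ⊗[F] A) :=
  (TensorProduct.assoc F A A A).toLinearMap ∘ₗ
    TensorProduct.map LinearMap.id (TensorProduct.lift m) ∘ₗ
    (TensorProduct.tensorTensorTensorComm F A A A A).toLinearMap

/-- `t23 m (r ⊗ s)` is `r₂₃ ∙ s₁₂`: on `(x ⊗ y) ⊗ (x' ⊗ y')` it gives `x' ⊗ m x y' ⊗ y`. -/
noncomputable def t23 {A : Type*} [AddCommGroup A] [Module F A]
    (m : A →ₗ[F] A →ₗ[F] A) :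
    ((A ⊗[F] A) ⊗[F] (A ⊗[F] A)) →ₗ[F] A ⊗[F] (A ⊗[F] A) :=
  (TensorProduct.leftComm F A A A).toLinearMap ∘ₗ
    TensorProduct.map LinearMap.id (TensorProduct.comm F A A).toLinearMap ∘ₗ
    TensorProduct.map (TensorProduct.lift m) LinearMap.id ∘ₗ
    (TensorProduct.tensorTensorTensorComm F A A A A).toLinearMap ∘ₗ
    TensorProduct.map LinearMap.id (TensorProduct.comm F A A).toLinearMap

/-- `aybE m r = r₁₂r₁₃ + r₁₃r₂₃ − r₂₃r₁₂`, the associative Yang–Baxter expression. -/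
noncomputable def aybE {A : Type*} [AddCommGroup A] [Module F A]
    (m : A →ₗ[F] A →ₗ[F] A) (r : A ⊗[F] A) : A ⊗[F] (A ⊗[F] A) :=
  t12 m (r ⊗ₜ r) + t13 m (r ⊗ₜ r) - t23 m (r ⊗ₜ r)

end Prelude

/-- for an antisymmetric solution `r` of the associative
Yang–Baxter equation, the induced map `r : (A*, ∘) → (A, ·)` is a homomorphism
of associative algebras. -/
theorem rmap_is_algebra_homomorphism
    {F A : Type*} [Field F] [AddCommGroup A] [Module F A] [FiniteDimensional F A]
    (mA : A →ₗ[F] A →ₗ[F] A) (hA : IsAssocMul mA)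
    (r : A ⊗[F] A)
    (hskew : (TensorProduct.comm F A A) r = -r)
    (hayb : aybE mA r = 0)
    (rmap : Module.Dual F A →ₗ[F] A)
    (hrmap : ∀ u v : Module.Dual F A, u (rmap v) = pair2 u v r)
    (Rd Ld : A →ₗ[F] Module.Dual F A →ₗ[F] Module.Dual F A)
    (hRd : ∀ (x y : A) (a : Module.Dual F A), Rd x a y = a (mA y x))
    (hLd : ∀ (x y : A) (a : Module.Dual F A), Ld x a y = a (mA x y))
    -- the induced product on `A*`
    (circ : Module.Dual F A → Module.Dual F A → Module.Dual F A)
    (hcirc : ∀ a b : Module.Dual F A, circ a b = Rd (rmap a) b + Ld (rmap b) a) :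
    ∀ a b : Module.Dual F A, rmap (circ a b) = mA (rmap a) (rmap b) := by
  intro a b
  have hsep : ∀ x y : A, (∀ u : Module.Dual F A, u x = u y) → x = y := by
    intro x y h
    rw [← sub_eq_zero, ← Module.forall_dual_apply_eq_zero_iff F (x - y)]
    intro u; simp [h u]
  obtain ⟨S, hS⟩ := TensorProduct.exists_finset r
  have hpair : ∀ f g : Module.Dual F A, pair2 f g r = ∑ p ∈ S, f p.1 * g p.2 := by
    intro f g; rw [hS]; simp [pair2]
  have hrm : ∀ v : Module.Dual F A, rmap v = ∑ p ∈ S, v p.2 • p.1 := by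
    intro v; apply hsep; intro u
    rw [hrmap, hpair]
    simp [smul_eq_mul, mul_comm]
  have hsk : ∀ f g : Module.Dual F A,
      ∑ p ∈ S, f p.2 * g p.1 = -∑ p ∈ S, f p.1 * g p.2 := by
    intro f g
    have h1 : pair2 f g ((TensorProduct.comm F A A) r) = ∑ p ∈ S, f p.2 * g p.1 := by
      rw [hS]; simp [pair2]
    rw [hskew, map_neg, hpair] at h1
    exact h1.symm
  apply hsep; intro u
  -- expansions of the three YBE terms
  have e12 : (TensorProduct.lid F F) ((TensorProduct.map u (pair2 a b)) (t12 mA (r ⊗ₜ r)))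
      = ∑ p ∈ S, ∑ q ∈ S, u (mA p.1 q.1) * (a p.2 * b q.2) := by
    rw [hS]
    simp [t12, pair2, TensorProduct.sum_tmul, TensorProduct.tmul_sum]
    exact Finset.sum_comm
  have e13 : (TensorProduct.lid F F) ((TensorProduct.map u (pair2 a b)) (t13 mA (r ⊗ₜ r)))
      = ∑ p ∈ S, ∑ q ∈ S, u p.1 * (a q.1 * b (mA p.2 q.2)) := by
    rw [hS]
    simp [t13, pair2, TensorProduct.sum_tmul, TensorProduct.tmul_sum]
    exact Finset.sum_comm
  have e23 : (TensorProduct.lid F F) ((TensorProduct.map u (pair2 a b)) (t23 mA (r ⊗ₜ r)))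
      = ∑ p ∈ S, ∑ q ∈ S, u q.1 * (a (mA p.1 q.2) * b p.2) := by
    rw [hS]
    simp [t23, pair2, TensorProduct.sum_tmul, TensorProduct.tmul_sum]
    exact Finset.sum_comm
  have hY : (∑ p ∈ S, ∑ q ∈ S, u (mA p.1 q.1) * (a p.2 * b q.2))
      + (∑ p ∈ S, ∑ q ∈ S, u p.1 * (a q.1 * b (mA p.2 q.2)))
      - (∑ p ∈ S, ∑ q ∈ S, u q.1 * (a (mA p.1 q.2) * b p.2)) = 0 := by
    have h := congrArg (fun t => (TensorProduct.lid F F) ((TensorProduct.map u (pair2 a b)) t)) hayb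
    simpa [aybE, e12, e13, e23] using h
  have hRHS : u (mA (rmap a) (rmap b))
      = ∑ p ∈ S, ∑ q ∈ S, u (mA p.1 q.1) * (a p.2 * b q.2) := by
    rw [hrm a, hrm b]
    simp only [map_sum, map_smul, LinearMap.sum_apply, LinearMap.smul_apply, smul_eq_mul,
      Finset.mul_sum]
    rw [Finset.sum_comm]
    exact Finset.sum_congr rfl fun p _ => Finset.sum_congr rfl fun q _ => by ring
  have hc : ∀ z : A, (circ a b) z
      = (∑ q ∈ S, a q.2 * b (mA z q.1)) + (∑ q ∈ S, b q.2 * a (mA q.1 z)) := by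
    intro z
    rw [hcirc]
    simp only [LinearMap.add_apply, hRd, hLd, hrm a, hrm b, map_sum, map_smul,
      LinearMap.sum_apply, LinearMap.smul_apply, smul_eq_mul]
  have hLHS : u (rmap (circ a b))
      = (∑ p ∈ S, ∑ q ∈ S, u p.1 * (a q.2 * b (mA p.2 q.1)))
      + (∑ p ∈ S, ∑ q ∈ S, u p.1 * (b q.2 * a (mA q.1 p.2))) := by
    rw [hrm (circ a b)]
    simp only [map_sum, map_smul, smul_eq_mul]
    rw [← Finset.sum_add_distrib]
    refine Finset.sum_congr rfl fun p _ => ?_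
    rw [hc, add_mul, Finset.sum_mul, Finset.sum_mul]
    congr 1 <;> exact Finset.sum_congr rfl fun q _ => by ring
  have hsk13 : ∀ p : A × A,
      ∑ q ∈ S, a q.1 * b (mA p.2 q.2) = -∑ q ∈ S, a q.2 * b (mA p.2 q.1) := by
    intro p
    have h := hsk (b ∘ₗ mA p.2) a
    simp only [LinearMap.comp_apply] at h
    rw [show (∑ q ∈ S, a q.1 * b (mA p.2 q.2)) = ∑ q ∈ S, b (mA p.2 q.2) * a q.1 from
      Finset.sum_congr rfl fun q _ => by ring, h]
    congr 1
    exact Finset.sum_congr rfl fun q _ => by ring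
  have h13 : (∑ p ∈ S, ∑ q ∈ S, u p.1 * (a q.1 * b (mA p.2 q.2)))
      = -(∑ p ∈ S, ∑ q ∈ S, u p.1 * (a q.2 * b (mA p.2 q.1))) := by
    rw [← Finset.sum_neg_distrib]
    refine Finset.sum_congr rfl fun p _ => ?_
    rw [← Finset.mul_sum, hsk13 p, mul_neg, Finset.mul_sum]
  have h23 : (∑ p ∈ S, ∑ q ∈ S, u q.1 * (a (mA p.1 q.2) * b p.2))
      = ∑ p ∈ S, ∑ q ∈ S, u p.1 * (b q.2 * a (mA q.1 p.2)) := by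
    rw [Finset.sum_comm]
    exact Finset.sum_congr rfl fun p _ => Finset.sum_congr rfl fun q _ => by ring
  rw [hLHS, hRHS]
  linear_combination -hY + h13 - h23
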